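/- arXiv:1701.02927 — 3 statements merged into one kernel-verified Lean document; each statement's English description precedes it below -/
import Mathlib

section
/- For every language L over a finite alphabet Σ, the upward closure of L (the set of words having a subword in L) is a regular language. -/
open List

section aux
variable {A : Type} [Fintype A] [DecidableEq A]

/-- DFA recognizing the upward closure of finitely many words `w i`. -/
def upDFA {m : ℕ} (w : Fin m → List A) : DFA A (∀ i, Fin ((w i).length + 1)) where
  step s a := fun i =>
    if h : (w i)[((s i) : ℕ)]? = some a then
      ⟨(s i) + 1, by
        rcases List.getElem?_eq_some_iff.mp h with ⟨h1, _⟩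
        omega⟩
    else s i
  start := fun _ => 0
  accept := {s | ∃ i, ((s i) : ℕ) = (w i).length}

lemma upDFA_evalFrom {m : ℕ} (w : Fin m → List A) (v : List A)
    (s : ∀ i, Fin ((w i).length + 1)) (i : Fin m) :
    (((upDFA w).evalFrom s v) i : ℕ) = (w i).length ↔ (w i).drop (s i) <+ v := by
  induction v generalizing s with
  | nil =>
    simp only [DFA.evalFrom_nil, List.sublist_nil, List.drop_eq_nil_iff]
    have := (s i).isLt
    omega
  | cons a v ih =>
    show (((upDFA w).evalFrom ((upDFA w).step s a) v) i : ℕ) = _ ↔ _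
    rw [ih]
    show (w i).drop ((if h : (w i)[((s i) : ℕ)]? = some a then _ else _ : Fin _) : ℕ) <+ v ↔ _
    split_ifs with h
    · rcases List.getElem?_eq_some_iff.mp h with ⟨h1, h2⟩
      conv_rhs => rw [show (w i).drop (s i) = (w i)[(s i : ℕ)] :: (w i).drop ((s i) + 1) from
        (List.getElem_cons_drop h1).symm]
      rw [h2]
      exact (List.cons_sublist_cons).symm
    · rcases Nat.lt_or_ge (s i : ℕ) (w i).length with h1 | h1
      · have hd : (w i).drop (s i) = (w i)[(s i : ℕ)] :: (w i).drop ((s i) + 1) :=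
          (List.getElem_cons_drop h1).symm
        have hne : (w i)[(s i : ℕ)] ≠ a := by
          intro he
          exact h (List.getElem?_eq_some_iff.mpr ⟨h1, he⟩)
        rw [hd]
        constructor
        · exact fun hs => hs.cons _
        · intro hs
          rcases List.sublist_cons_iff.mp hs with hs | ⟨r, hr, hrs⟩
          · exact hs
          · exact absurd (List.cons.injEq .. ▸ hr).1 hne
      · have hnil : (w i).drop (s i) = [] := List.drop_eq_nil_iff.mpr h1
        simp [hnil]

lemma upDFA_accepts {m : ℕ} (w : Fin m → List A) :
    (upDFA w).accepts = {v : List A | ∃ i, w i <+ v} := by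
  ext v
  rw [DFA.mem_accepts]
  show (∃ i, _) ↔ _
  constructor
  · rintro ⟨i, hi⟩
    exact ⟨i, by simpa [upDFA] using (upDFA_evalFrom w v _ i).mp hi⟩
  · rintro ⟨i, hi⟩
    exact ⟨i, (upDFA_evalFrom w v _ i).mpr (by simpa [upDFA] using hi)⟩

/-- Finite basis from Higman's lemma. -/
lemma exists_finite_basis (L : Language A) :
    ∃ s : Finset (List A), (∀ x ∈ s, x ∈ L) ∧ ∀ u ∈ L, ∃ v ∈ s, v <+ u := by
  by_contra hc
  push_neg at hc
  have key : ∀ s : Finset (List A), (∀ x ∈ s, x ∈ L) →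
      ∃ u, u ∈ L ∧ ∀ v ∈ s, ¬ v <+ u := by
    intro s hs
    rcases hc s hs with ⟨u, hu, h⟩
    exact ⟨u, hu, fun v hv hvu => (h v hv hvu).elim⟩
  choose F hF1 hF2 using key
  let g : ℕ → {s : Finset (List A) // ∀ x ∈ s, x ∈ L} := fun n =>
    Nat.rec ⟨∅, by simp⟩
      (fun _ p => ⟨insert (F p.1 p.2) p.1, by
        intro x hx
        rcases Finset.mem_insert.mp hx with h | h
        · subst h; exact hF1 p.1 p.2
        · exact p.2 x h⟩) n
  let f : ℕ → List A := fun n => F (g n).1 (g n).2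
  have hmono : Monotone (fun n => (g n).1) := by
    apply monotone_nat_of_le_succ
    intro n
    show (g n).1 ⊆ insert (F (g n).1 (g n).2) (g n).1
    exact Finset.subset_insert _ _
  have hmem : ∀ {m n : ℕ}, m < n → f m ∈ (g n).1 := by
    intro m n hmn
    have h1 : f m ∈ (g (m + 1)).1 := by
      show f m ∈ insert (F (g m).1 (g m).2) (g m).1
      exact Finset.mem_insert_self _ _
    exact hmono hmn h1
  -- Higman's lemma
  have hpwo : {l : List A | ∀ x ∈ l, x ∈ ((Finset.univ : Finset A) : Set A)}.PartiallyWellOrderedOn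
      (List.SublistForall₂ (· = · : A → A → Prop)) :=
    Set.PartiallyWellOrderedOn.partiallyWellOrderedOn_sublistForall₂ _
      (Finset.univ.partiallyWellOrderedOn)
  rcases hpwo (fun n => ⟨f n, by simp⟩) with ⟨m, n, hmn, hsub⟩
  rcases List.sublistForall₂_iff.mp hsub with ⟨l, hl1, hl2⟩
  have heq : f m = l := by
    rwa [List.forall₂_eq_eq_eq] at hl1
  exact hF2 (g n).1 (g n).2 (f m) (hmem hmn) (heq ▸ hl2)

end aux

/-- For every language `L` over a finite alphabet `A`, the upward closure
of `L` (the set of words having a subword in `L`) is regular, i.e. recognized by a DFA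
with finitely many states. -/
theorem upward_closure_regular {A : Type} [Fintype A] (L : Language A) :
    ∃ (n : ℕ) (M : DFA A (Fin n)),
      M.accepts = {v : List A | ∃ u ∈ L, u.Sublist v} := by
  classical
  rcases exists_finite_basis L with ⟨s, hs1, hs2⟩
  set m := s.toList.length with hm
  let w : Fin m → List A := fun i => s.toList.get i
  have hlang : {v : List A | ∃ i, w i <+ v} = {v : List A | ∃ u ∈ L, u.Sublist v} := by
    ext v
    constructor
    · rintro ⟨i, hi⟩
      refine ⟨w i, hs1 _ ?_, hi⟩
      exact Finset.mem_toList.mp (List.get_mem _ _)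
    · rintro ⟨u, hu, huv⟩
      rcases hs2 u hu with ⟨b, hb, hbu⟩
      rcases List.get_of_mem (Finset.mem_toList.mpr hb) with ⟨i, hi⟩
      exact ⟨i, by rw [show w i = b from hi]; exact hbu.trans huv⟩
  let σ := ∀ i : Fin m, Fin ((w i).length + 1)
  let e : σ ≃ Fin (Fintype.card σ) := Fintype.equivFin σ
  refine ⟨Fintype.card σ, DFA.reindex e (upDFA w), ?_⟩
  rw [DFA.accepts_reindex, upDFA_accepts, hlang]
end

section
/- For every language L over a finite alphabet Σ, the downward closure of L (the set of subwords of words in L) is a regular language. -/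
open List

section Aux

variable {A : Type}

/-- One step of the subword-matching automaton for the pattern `w`. -/
def matchStep (w : List A) [DecidableEq A] (s : Fin (w.length + 1)) (a : A) :
    Fin (w.length + 1) :=
  if h : (s : ℕ) < w.length then
    if w[(s:ℕ)]'h = a then ⟨(s : ℕ) + 1, by omega⟩ else s
  else s

lemma matchEval (w : List A) [DecidableEq A] :
    ∀ (u : List A) (k : ℕ) (hk : k ≤ w.length),
      ((List.foldl (matchStep w) ⟨k, by omega⟩ u : Fin (w.length + 1)) : ℕ) = w.length ↔
        w.drop k <+ u := by
  intro u
  induction u with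
  | nil =>
      intro k hk
      simp only [foldl_nil]
      constructor
      · intro h
        have : w.drop k = [] := by
          apply List.drop_eq_nil_of_le
          omega
        simp [this]
      · intro h
        have := List.sublist_nil.mp h
        have hlen := congrArg List.length this
        simp [List.length_drop] at hlen
        omega
  | cons a u ih =>
      intro k hk
      rw [foldl_cons]
      by_cases h : k < w.length
      · by_cases ha : w[k]'h = a
        · have hstep : matchStep w ⟨k, by omega⟩ a = ⟨k + 1, by omega⟩ := by
            simp [matchStep, h, ha]
          rw [hstep, ih (k + 1) (by omega)]
          have hdk : w.drop k = a :: w.drop (k + 1) := by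
            rw [List.drop_eq_getElem_cons h]
            rw [ha]
          rw [hdk]
          constructor
          · intro hsub
            exact List.cons_sublist_cons.mpr hsub
          · intro hsub
            exact List.cons_sublist_cons.mp hsub
        · have hstep : matchStep w ⟨k, by omega⟩ a = ⟨k, by omega⟩ := by
            simp [matchStep, h, ha]
          rw [hstep, ih k (by omega)]
          constructor
          · intro hsub
            exact hsub.cons a
          · intro hsub
            rcases List.sublist_cons_iff.mp hsub with h1 | ⟨r, hr, hrs⟩
            · exact h1
            · exfalso
              apply ha
              have : w.drop k = a :: r := hr
              have h2 := congrArg (fun l => l.head?) this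
              simp only [List.head?_drop, List.head?_cons] at h2
              rw [List.getElem?_eq_getElem h] at h2
              exact Option.some.inj h2
      · have hk' : k = w.length := by omega
        have hstep : matchStep w ⟨k, by omega⟩ a = ⟨k, by omega⟩ := by
          simp [matchStep, h]
        rw [hstep, ih k hk]
        have hnil : w.drop k = [] := List.drop_eq_nil_of_le hk'.ge
        simp [hnil]

end Aux

section Basis

variable {A : Type} [Fintype A]

lemma pwo_sublist :
    (Set.univ : Set (List A)).PartiallyWellOrderedOn (· <+ ·) := by
  have h0 : (Set.univ : Set A).PartiallyWellOrderedOn (· = ·) := by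
    intro f
    have : ¬ Function.Injective f := fun hinj => (Finite.of_injective f hinj).false
    simp only [Function.Injective] at this
    push_neg at this
    obtain ⟨m, n, hfe, hne⟩ := this
    rcases lt_or_gt_of_ne hne with h | h
    · exact ⟨m, n, h, congrArg Subtype.val hfe⟩
    · exact ⟨n, m, h, congrArg Subtype.val hfe.symm⟩
  have h1 := Set.PartiallyWellOrderedOn.partiallyWellOrderedOn_sublistForall₂ (· = ·) h0
  intro f
  obtain ⟨m, n, hmn, hr⟩ := h1 (fun i => ⟨(f i).1, by simp⟩)
  refine ⟨m, n, hmn, ?_⟩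
  obtain ⟨l, hl1, hl2⟩ := List.sublistForall₂_iff.mp hr
  rw [List.forall₂_eq_eq_eq] at hl1
  show (f m).1 <+ (f n).1
  exact hl1 ▸ hl2

/-- Every upward-closed set of words over a finite alphabet is a finite union of
upward closures of single words. -/
lemma exists_finite_basis_s1 (U : Set (List A))
    (hU : ∀ u ∈ U, ∀ v : List A, u <+ v → v ∈ U) :
    ∃ (k : ℕ) (b : Fin k → List A), U = {v | ∃ i, b i <+ v} := by
  classical
  set Min : Set (List A) := {u ∈ U | ∀ u' ∈ U, u' <+ u → u' = u} with hMin
  -- every element of U has a minimal element below it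
  have hbelow' : ∀ (n : ℕ) (u : List A), u.length ≤ n → u ∈ U → ∃ m ∈ Min, m <+ u := by
    intro n
    induction n with
    | zero =>
      intro u hlen hu
      refine ⟨u, ⟨hu, fun u' _ hsub => ?_⟩, List.Sublist.refl u⟩
      have : u = [] := List.eq_nil_of_length_eq_zero (by omega)
      subst this
      exact List.sublist_nil.mp hsub
    | succ n ih =>
      intro u hlen hu
      by_cases hm : u ∈ Min
      · exact ⟨u, hm, List.Sublist.refl u⟩
      · simp only [hMin, Set.mem_setOf_eq, hu, true_and] at hm
        push_neg at hm
        obtain ⟨u', hu', hsub, hne⟩ := hm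
        have hlt : u'.length < u.length := by
          rcases lt_or_eq_of_le hsub.length_le with h | h
          · exact h
          · exact absurd (hsub.eq_of_length h) hne
        obtain ⟨m, hm1, hm2⟩ := ih u' (by omega) hu'
        exact ⟨m, hm1, hm2.trans hsub⟩
  have hbelow : ∀ u ∈ U, ∃ m ∈ Min, m <+ u := fun u hu =>
    hbelow' u.length u le_rfl hu
  -- Min is finite
  have hfin : Min.Finite := by
    by_contra hinf
    have hinf : Min.Infinite := hinf
    have f := hinf.natEmbedding
    obtain ⟨m, n, hmn, hsub⟩ := pwo_sublist (fun i => ⟨(f i : List A), Set.mem_univ _⟩)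
    have hmem : (f n : List A) ∈ Min := (f n).2
    have heq : (f m : List A) = (f n : List A) :=
      hmem.2 (f m : List A) (f m).2.1 hsub
    exact absurd (f.injective (Subtype.ext heq)) (Nat.ne_of_lt hmn)
  -- enumerate Min
  refine ⟨hfin.toFinset.card, fun i => (hfin.toFinset.equivFin.symm i : List A), ?_⟩
  ext v
  simp only [Set.mem_setOf_eq]
  constructor
  · intro hv
    obtain ⟨m, hm, hsub⟩ := hbelow v hv
    refine ⟨hfin.toFinset.equivFin ⟨m, hfin.mem_toFinset.mpr hm⟩, ?_⟩
    simpa using hsub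
  · rintro ⟨i, hsub⟩
    have hmem : (hfin.toFinset.equivFin.symm i : List A) ∈ Min := by
      have := (hfin.toFinset.equivFin.symm i).2
      exact hfin.mem_toFinset.mp this
    exact hU _ hmem.1 v hsub

end Basis

/-- For every language `L` over a finite alphabet `A`, the downward closure
of `L` (the set of subwords of words in `L`) is regular. -/
theorem downward_closure_regular {A : Type} [Fintype A] (L : Language A) :
    ∃ (n : ℕ) (M : DFA A (Fin n)),
      M.accepts = {u : List A | ∃ v ∈ L, u.Sublist v} := by
  classical
  set D : Set (List A) := {u : List A | ∃ v ∈ L, u.Sublist v} with hD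
  -- the complement of D is upward closed
  obtain ⟨k, b, hb⟩ := exists_finite_basis_s1 (Dᶜ) (by
    intro u hu v hsub
    intro hv
    apply hu
    obtain ⟨w, hw, hvw⟩ := hv
    exact ⟨w, hw, hsub.trans hvw⟩)
  -- D = words avoiding all the b i as subwords
  have hDeq : D = {v : List A | ∀ i, ¬ b i <+ v} := by
    ext v
    have : v ∈ Dᶜ ↔ ∃ i, b i <+ v := by rw [hb]; rfl
    simp only [Set.mem_compl_iff] at this
    constructor
    · intro hv i hsub
      exact (not_exists.mp (fun h => (this.mpr h) hv)) i hsub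
    · intro hv
      by_contra hvd
      obtain ⟨i, hi⟩ := this.mp hvd
      exact hv i hi
  -- build the product matcher DFA
  let σ : Type := ∀ i : Fin k, Fin ((b i).length + 1)
  let M0 : DFA A σ :=
    { step := fun s a i => matchStep (b i) (s i) a
      start := fun i => ⟨0, by omega⟩
      accept := {s | ∀ i, ((s i : ℕ) ≠ (b i).length)} }
  have hfoldl : ∀ (u : List A) (s : σ) (i : Fin k),
      (List.foldl M0.step s u) i = List.foldl (matchStep (b i)) (s i) u := by
    intro u
    induction u with
    | nil => intro s i; rfl
    | cons a u ih => intro s i; rw [List.foldl_cons, List.foldl_cons, ih]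
  have hacc : M0.accepts = D := by
    ext u
    rw [hDeq]
    show (∀ i, ((M0.eval u) i : ℕ) ≠ (b i).length) ↔ (∀ i, ¬ b i <+ u)
    apply forall_congr'
    intro i
    have h1 : (M0.eval u) i = List.foldl (matchStep (b i)) ⟨0, by omega⟩ u :=
      hfoldl u M0.start i
    rw [h1]
    exact not_congr ((matchEval (b i) u 0 (by omega)).trans (by rw [List.drop_zero]))
  -- transport to Fin n
  refine ⟨Fintype.card σ, DFA.reindex (Fintype.equivFin σ) M0, ?_⟩
  rw [DFA.accepts_reindex, hacc]
end

section
/- The subword (subsequence) relation on finite words over a finite alphabet is a well-quasi-order: every infinite sequence of words contains two indices i < j with the i-th word a subword of the j-th word. -/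
/-- Higman's lemma: the subword (subsequence) relation on finite words over
a finite alphabet is a well-quasi-order. -/
theorem subword_wqo {A : Type} [Fintype A] (f : ℕ → List A) :
    ∃ i j : ℕ, i < j ∧ (f i).Sublist (f j) := by
  have h := Set.PartiallyWellOrderedOn.partiallyWellOrderedOn_sublistForall₂
    (Eq : A → A → Prop) (s := Set.univ) (Set.Finite.partiallyWellOrderedOn Set.finite_univ)
  obtain ⟨i, j, hij, h⟩ := h (fun n => ⟨f n, by simp [Set.mem_setOf_eq]⟩)
  refine ⟨i, j, hij, ?_⟩
  obtain ⟨l, hl, hsub⟩ := List.sublistForall₂_iff.1 h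
  rw [List.forall₂_eq_eq_eq] at hl
  exact (show f i = l from hl) ▸ hsub
end
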